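/- Let n ≥ 1, let A be an n×n real matrix with nonnegative entries, let β, δ > 0, and let f : ℝⁿ → ℝⁿ be the SIS vector field f_i(x) = −δ x_i + (1 − x_i) β Σ_{j=1}^n A_{ji} x_j. If x : ℝ → ℝⁿ is a solution of ẋ = f(x) (i.e. each component x_i is differentiable with x_i'(t) = f_i(x(t)) for all t) and x(0) ∈ [0,1]ⁿ, then x(t) ∈ [0,1]ⁿ for all t ≥ 0. -/

import Mathlib

open Finset

lemma posSq_hasDerivAt (a : ℝ) :
    HasDerivAt (fun u : ℝ => (max u 0) ^ 2) (2 * max a 0) a := by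
  rcases lt_trichotomy a 0 with h | h | h
  · have heq : (fun u : ℝ => (max u 0) ^ 2) =ᶠ[nhds a] fun _ => (0 : ℝ) := by
      filter_upwards [eventually_lt_nhds h] with u hu
      simp [max_eq_right hu.le]
    have h0 : HasDerivAt (fun _ : ℝ => (0 : ℝ)) (2 * max a 0) a := by
      simpa [max_eq_right h.le] using hasDerivAt_const a (0 : ℝ)
    exact h0.congr_of_eventuallyEq heq
  · subst h
    rw [hasDerivAt_iff_tendsto_slope]
    have hcont : Filter.Tendsto (fun u : ℝ => max u 0) (nhdsWithin 0 {(0:ℝ)}ᶜ) (nhds (2 * max 0 0)) := by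
      have h1 : Filter.Tendsto (fun u : ℝ => max u 0) (nhds 0) (nhds (max 0 0)) :=
        (continuous_id.max continuous_const).tendsto (0:ℝ)
      simpa using h1.mono_left nhdsWithin_le_nhds
    refine hcont.congr' ?_
    filter_upwards [self_mem_nhdsWithin] with u hu
    have hu' : u ≠ 0 := hu
    rcases le_or_gt u 0 with h1 | h1
    · simp [slope, max_eq_right h1]
    · rw [slope_def_field, max_eq_left h1.le, max_self]
      field_simp
      ring
  · have heq : (fun u : ℝ => (max u 0) ^ 2) =ᶠ[nhds a] fun u => u ^ 2 := by
      filter_upwards [eventually_gt_nhds h] with u hu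
      simp [max_eq_left hu.le]
    have h2 : HasDerivAt (fun u : ℝ => u ^ 2) (2 * max a 0) a := by
      simpa [max_eq_left h.le, mul_comm] using (hasDerivAt_pow 2 a)
    exact h2.congr_of_eventuallyEq heq

lemma id_pu (u : ℝ) : max (-u) 0 * u = -(max (-u) 0) ^ 2 := by
  rcases le_or_gt u 0 with h | h
  · rw [max_eq_left (by linarith)]; ring
  · rw [max_eq_right (by linarith)]; ring

lemma id_p1u (u : ℝ) : max (-u) 0 * (1 - u) = max (-u) 0 + (max (-u) 0) ^ 2 := by
  rcases le_or_gt u 0 with h | h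
  · rw [max_eq_left (by linarith)]; ring
  · rw [max_eq_right (by linarith)]; ring

lemma id_qu (u : ℝ) : max (u - 1) 0 * u = (max (u - 1) 0) ^ 2 + max (u - 1) 0 := by
  rcases le_or_gt u 1 with h | h
  · rw [max_eq_right (by linarith)]; ring
  · rw [max_eq_left (by linarith)]; ring

lemma id_q1u (u : ℝ) : max (u - 1) 0 * (1 - u) = -(max (u - 1) 0) ^ 2 := by
  rcases le_or_gt u 1 with h | h
  · rw [max_eq_right (by linarith)]; ring
  · rw [max_eq_left (by linarith)]; ring

set_option maxHeartbeats 2000000 in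
/-- Forward invariance of the hypercube for the SIS dynamics (Proposition 9.1):
any solution of `ẋ_i = -δ x_i + (1 - x_i) β Σ_j A_{ji} x_j` starting in `[0,1]ⁿ`
remains in `[0,1]ⁿ` for all `t ≥ 0`. -/
theorem SIS_forward_invariance
    (n : ℕ) (hn : 1 ≤ n)
    (A : Fin n → Fin n → ℝ) (hA : ∀ i j, 0 ≤ A i j)
    (β δ : ℝ) (hβ : 0 < β) (hδ : 0 < δ)
    (x : ℝ → Fin n → ℝ)
    (hode : ∀ t : ℝ, ∀ i : Fin n,
      HasDerivAt (fun s => x s i)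
        (-δ * x t i + (1 - x t i) * β * ∑ j, A j i * x t j) t)
    (h0 : ∀ i, x 0 i ∈ Set.Icc (0 : ℝ) 1) :
    ∀ t : ℝ, 0 ≤ t → ∀ i, x t i ∈ Set.Icc (0 : ℝ) 1 := by
  intro T hT
  -- continuity of the solution
  have hcx : Continuous x := by
    apply continuous_pi
    intro i
    rw [continuous_iff_continuousAt]
    intro t
    exact (hode t i).continuousAt
  -- bound on the solution over [0,T]
  obtain ⟨C0, hC0⟩ := (isCompact_Icc (a := (0:ℝ)) (b := T)).exists_bound_of_continuousOn
    hcx.continuousOn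
  set K : ℝ := max C0 1 with hKdef
  have hK0 : (0:ℝ) ≤ K := le_trans zero_le_one (le_max_right _ _)
  have hxK : ∀ t ∈ Set.Icc (0:ℝ) T, ∀ i, |x t i| ≤ K := by
    intro t ht i
    calc |x t i| = ‖x t i‖ := rfl
      _ ≤ ‖x t‖ := norm_le_pi_norm (x t) i
      _ ≤ C0 := hC0 t ht
      _ ≤ K := le_max_left _ _
  clear_value K
  -- bound on the matrix entries
  set a : ℝ := ∑ i, ∑ j, A i j with hadef
  have ha0 : 0 ≤ a := Finset.sum_nonneg fun i _ => Finset.sum_nonneg fun j _ => hA i j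
  have hAa : ∀ i j, A i j ≤ a := by
    intro i j
    calc A i j ≤ ∑ j', A i j' := Finset.single_le_sum (fun j' _ => hA i j') (Finset.mem_univ j)
      _ ≤ a := Finset.single_le_sum (f := fun i' => ∑ j', A i' j')
          (fun i' _ => Finset.sum_nonneg fun j' _ => hA i' j') (Finset.mem_univ i)
  clear_value a
  -- the Lyapunov-type function g and its derivative G
  set D : ℝ → Fin n → ℝ :=
    fun t i => -δ * x t i + (1 - x t i) * β * ∑ j, A j i * x t j with hD
  set g : ℝ → ℝ :=
    fun t => ∑ i, ((max (-(x t i)) 0) ^ 2 + (max (x t i - 1) 0) ^ 2) with hg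
  set G : ℝ → ℝ :=
    fun t => ∑ i, (2 * max (-(x t i)) 0 * (-(D t i)) + 2 * max (x t i - 1) 0 * (D t i))
    with hG
  have hgderiv : ∀ t, HasDerivAt g (G t) t := by
    intro t
    apply HasDerivAt.fun_sum
    intro i _
    have h1 : HasDerivAt (fun s => (max (-(x s i)) 0) ^ 2)
        (2 * max (-(x t i)) 0 * (-(D t i))) t :=
      by have := (posSq_hasDerivAt (-(x t i))).comp t ((hode t i).neg); exact this
    have h2 : HasDerivAt (fun s => (max (x s i - 1) 0) ^ 2)
        (2 * max (x t i - 1) 0 * (D t i)) t :=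
      by have := (posSq_hasDerivAt (x t i - 1)).comp t ((hode t i).sub_const 1); exact this
    exact h1.add h2
  -- nonnegativity of g
  have hgnn : ∀ t, 0 ≤ g t := by
    intro t
    apply Finset.sum_nonneg
    intro i _
    positivity
  set C : ℝ := 2 * β * a * n * (1 + K) with hC
  clear_value C
  -- key differential inequality
  have hkey : ∀ t ∈ Set.Icc (0:ℝ) T, G t ≤ C * g t := by
    intro t ht
    set P : ℝ := ∑ j, max (-(x t j)) 0 with hP
    have hP0 : 0 ≤ P := Finset.sum_nonneg fun j _ => le_max_right _ _
    have hpK : ∀ j, max (-(x t j)) 0 ≤ K := by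
      intro j
      apply max_le _ hK0
      calc -(x t j) ≤ |x t j| := neg_le_abs _
        _ ≤ K := hxK t ht j
    have hPK : P ≤ n * K := by
      calc P ≤ ∑ _j : Fin n, K := Finset.sum_le_sum fun j _ => hpK j
        _ = n * K := by simp [Finset.sum_const, mul_comm]
    set P2 : ℝ := ∑ j, (max (-(x t j)) 0) ^ 2 with hP2def
    set Q2 : ℝ := ∑ j, (max (x t j - 1) 0) ^ 2 with hQ2def
    have hP2nn : 0 ≤ P2 := Finset.sum_nonneg fun j _ => sq_nonneg _
    have hQ2nn : 0 ≤ Q2 := Finset.sum_nonneg fun j _ => sq_nonneg _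
    have hPsq : P ^ 2 ≤ n * P2 := by
      have := sq_sum_le_card_mul_sum_sq (s := Finset.univ) (f := fun j => max (-(x t j)) 0)
      rw [hP, hP2def]
      simpa using this
    clear_value P P2 Q2
    -- per-coordinate estimate
    have hterm : ∀ i : Fin n,
        2 * max (-(x t i)) 0 * (-(D t i)) + 2 * max (x t i - 1) 0 * (D t i)
          ≤ 2 * β * a * P * ((max (x t i - 1) 0) ^ 2 + max (-(x t i)) 0
              + (max (-(x t i)) 0) ^ 2) := by
      intro i
      set p : ℝ := max (-(x t i)) 0 with hp
      set q : ℝ := max (x t i - 1) 0 with hq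
      set S : ℝ := ∑ j, A j i * x t j with hS
      have hSP : -S ≤ a * P := by
        have : ∀ j : Fin n, -(A j i * x t j) ≤ a * max (-(x t j)) 0 := by
          intro j
          have h1 : -(A j i * x t j) = A j i * (-(x t j)) := by ring
          rw [h1]
          calc A j i * (-(x t j)) ≤ A j i * max (-(x t j)) 0 :=
                mul_le_mul_of_nonneg_left (le_max_left _ _) (hA j i)
            _ ≤ a * max (-(x t j)) 0 :=
                mul_le_mul_of_nonneg_right (hAa j i) (le_max_right _ _)
        calc -S = ∑ j, -(A j i * x t j) := by rw [hS, ← Finset.sum_neg_distrib]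
          _ ≤ ∑ j, a * max (-(x t j)) 0 := Finset.sum_le_sum fun j _ => this j
          _ = a * P := by rw [hP, Finset.mul_sum]
      have hDval : D t i = -δ * x t i + (1 - x t i) * β * S := rfl
      have hp0 : 0 ≤ p := le_max_right _ _
      have hq0 : 0 ≤ q := le_max_right _ _
      have e1 : 2 * p * (-(D t i)) + 2 * q * (D t i)
          = -(2 * δ) * (q ^ 2 + q + p ^ 2) - 2 * β * S * (q ^ 2 + p + p ^ 2) := by
        rw [hDval]
        have i1 := id_pu (x t i)
        have i2 := id_p1u (x t i)
        have i3 := id_qu (x t i)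
        have i4 := id_q1u (x t i)
        rw [← hp] at i1 i2
        rw [← hq] at i3 i4
        linear_combination (2 * δ) * i1 - (2 * δ) * i3 - (2 * β * S) * i2
          + (2 * β * S) * i4
      rw [e1]
      have h1 : 0 ≤ 2 * δ * (q ^ 2 + q + p ^ 2) := by positivity
      have h2 : 0 ≤ 2 * β * ((q ^ 2 + p + p ^ 2) * (a * P + S)) := by
        apply mul_nonneg (by positivity)
        apply mul_nonneg (by positivity)
        linarith
      nlinarith [h1, h2]
    -- sum the estimate
    have hsum : G t ≤ 2 * β * a * (P * (Q2 + P + P2)) := by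
      rw [hG]
      calc (∑ i, (2 * max (-(x t i)) 0 * (-(D t i)) + 2 * max (x t i - 1) 0 * (D t i))) ≤ ∑ i, 2 * β * a * P * ((max (x t i - 1) 0) ^ 2 + max (-(x t i)) 0
            + (max (-(x t i)) 0) ^ 2) := Finset.sum_le_sum fun i _ => hterm i
        _ = 2 * β * a * (P * (Q2 + P + P2)) := by
            rw [← Finset.mul_sum]
            rw [Finset.sum_add_distrib, Finset.sum_add_distrib]
            rw [hQ2def, hP, hP2def]; ring
    have hgt : g t = P2 + Q2 := by
      rw [hg, hP2def, hQ2def, ← Finset.sum_add_distrib]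
    rw [hgt, hC]
    have s1 : P * Q2 ≤ (n * K) * Q2 := mul_le_mul_of_nonneg_right hPK hQ2nn
    have s2 : P * P ≤ n * P2 := by nlinarith [hPsq]
    have s3 : P * P2 ≤ (n * K) * P2 := mul_le_mul_of_nonneg_right hPK hP2nn
    have hba : (0:ℝ) ≤ 2 * β * a := by positivity
    have hcomb : P * (Q2 + P + P2) ≤ (n * K) * Q2 + n * P2 + (n * K) * P2 := by
      have e : P * (Q2 + P + P2) = P * Q2 + P * P + P * P2 := by ring
      rw [e]
      linarith [s1, s2, s3]
    have hmul : 2 * β * a * (P * (Q2 + P + P2))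
        ≤ 2 * β * a * ((n * K) * Q2 + n * P2 + (n * K) * P2) :=
      mul_le_mul_of_nonneg_left hcomb hba
    have hq2' : (0:ℝ) ≤ 2 * β * a * n * Q2 := by positivity
    linarith [hsum, hmul, hq2']
  -- Gronwall-type argument via h t = g t * exp (-C t)
  set h : ℝ → ℝ := fun t => g t * Real.exp (-C * t) with hh
  have hhderiv : ∀ t, HasDerivAt h
      (G t * Real.exp (-C * t) + g t * (Real.exp (-C * t) * (-C))) t := by
    intro t
    have hexp : HasDerivAt (fun s : ℝ => Real.exp (-C * s)) (Real.exp (-C * t) * (-C)) t := by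
      have h1 : HasDerivAt (fun s : ℝ => -C * s) (-C) t := by
        simpa using (hasDerivAt_id t).const_mul (-C)
      exact (Real.hasDerivAt_exp (-C * t)).comp t h1
    exact (hgderiv t).mul hexp
  clear_value D g G h
  have hanti : AntitoneOn h (Set.Icc 0 T) := by
    apply antitoneOn_of_deriv_nonpos (convex_Icc 0 T)
    · exact fun t _ => ((hhderiv t).continuousAt).continuousWithinAt
    · exact fun t _ => ((hhderiv t).differentiableAt).differentiableWithinAt
    · intro t htint
      rw [interior_Icc] at htint
      rw [(hhderiv t).deriv]
      have hk := hkey t ⟨htint.1.le, htint.2.le⟩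
      have he : (0:ℝ) < Real.exp (-C * t) := Real.exp_pos _
      have hmm := mul_le_mul_of_nonneg_right hk he.le
      nlinarith [hmm]
  have hg0 : g 0 = 0 := by
    simp only [hg]
    apply Finset.sum_eq_zero
    intro i _
    obtain ⟨hi0, hi1⟩ := h0 i
    rw [max_eq_right (by linarith), max_eq_right (by linarith)]
    ring
  have hhT : h T ≤ h 0 := hanti (Set.left_mem_Icc.mpr hT) (Set.right_mem_Icc.mpr hT) hT
  have hhTval : g T * Real.exp (-C * T) ≤ g 0 * Real.exp (-C * 0) := by
    simpa only [hh] using hhT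
  rw [hg0, zero_mul] at hhTval
  have he : (0:ℝ) < Real.exp (-C * T) := Real.exp_pos (-C * T)
  have hgTle : g T ≤ 0 := by
    refine le_of_mul_le_mul_right ?_ he
    rw [zero_mul]
    exact hhTval
  have hgT : g T = 0 := le_antisymm hgTle (hgnn T)
  simp only [hg] at hgT
  -- conclude
  intro i
  have hzero : (max (-(x T i)) 0) ^ 2 + (max (x T i - 1) 0) ^ 2 = 0 :=
    (Finset.sum_eq_zero_iff_of_nonneg
      (fun j (_ : j ∈ Finset.univ) => by positivity)).mp hgT i (Finset.mem_univ i)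
  have hp2 : (max (-(x T i)) 0) ^ 2 = 0 :=
    le_antisymm (by linarith [sq_nonneg (max (x T i - 1) 0)]) (sq_nonneg _)
  have hq2 : (max (x T i - 1) 0) ^ 2 = 0 :=
    le_antisymm (by linarith [sq_nonneg (max (-(x T i)) 0)]) (sq_nonneg _)
  have hple : max (-(x T i)) 0 = 0 ∧ max (x T i - 1) 0 = 0 :=
    ⟨pow_eq_zero_iff two_ne_zero |>.mp hp2, pow_eq_zero_iff two_ne_zero |>.mp hq2⟩
  constructor
  · have := le_max_left (-(x T i)) 0
    rw [hple.1] at this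
    linarith
  · have := le_max_left (x T i - 1) 0
    rw [hple.2] at this
    linarith
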